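/- Let n ≥ 2 and let G_n be the subgroup of PGL_2(ℤ) of classes of matrices α with det α = ±1 and α ≡ λI mod n for some integer λ. Then G_n contains Γ(n) as a normal subgroup, and the quotient G_n/Γ(n) is isomorphic to { λ ∈ (ℤ/nℤ)^× | λ² ≡ ±1 mod n } / {±1 mod n}. -/
import Mathlib


open Matrix

/-- Reduction mod `n` on `GL_2`. -/
def redMap (n : ℕ) : GL (Fin 2) ℤ →* GL (Fin 2) (ZMod n) :=
  Units.map ((Int.castRingHom (ZMod n)).mapMatrix.toMonoidHom)

/-- The subgroup of scalar matrices in `GL_2(ℤ/nℤ)`. -/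
def scalarUnits (n : ℕ) : Subgroup (GL (Fin 2) (ZMod n)) :=
  (Units.map (Matrix.scalar (Fin 2) : ZMod n →+* Matrix (Fin 2) (Fin 2) (ZMod n)).toMonoidHom).range

/-- `G_n`: matrices in `GL_2(ℤ)` congruent to a scalar matrix `λI` mod `n`. -/
def Ghat (n : ℕ) : Subgroup (GL (Fin 2) ℤ) :=
  Subgroup.comap (redMap n) (scalarUnits n)

/-- The subgroup `{±1}` of `(ℤ/nℤ)^×`. -/
def pmOne (n : ℕ) : Subgroup (ZMod n)ˣ :=
  Subgroup.closure {(-1 : (ZMod n)ˣ)}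

/-- `Γ(n)`: matrices in `GL_2(ℤ)` congruent to `±I` mod `n`. -/
def Gammahat (n : ℕ) : Subgroup (GL (Fin 2) ℤ) :=
  Subgroup.comap (redMap n)
    (Subgroup.map
      (Units.map (Matrix.scalar (Fin 2) : ZMod n →+* Matrix (Fin 2) (Fin 2) (ZMod n)).toMonoidHom)
      (pmOne n))

/-- `{ λ ∈ (ℤ/nℤ)^× | λ² ≡ ±1 mod n }`. -/
def Ktarget (n : ℕ) : Subgroup (ZMod n)ˣ :=
  Subgroup.comap (powMonoidHom 2 : (ZMod n)ˣ →* (ZMod n)ˣ) (pmOne n)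

namespace Stmt10Aux

/-- scalar embedding of units -/
def s (n : ℕ) : (ZMod n)ˣ →* GL (Fin 2) (ZMod n) :=
  Units.map (Matrix.scalar (Fin 2) : ZMod n →+* Matrix (Fin 2) (Fin 2) (ZMod n)).toMonoidHom

lemma s_inj (n : ℕ) : Function.Injective (s n) :=
  Units.map_injective (fun a b h => Matrix.scalar_inj.mp h)

lemma mem_Ghat {n : ℕ} {A : GL (Fin 2) ℤ} :
    A ∈ Ghat n ↔ ∃ u : (ZMod n)ˣ, s n u = redMap n A := Iff.rfl

lemma mem_pmOne {n : ℕ} {x : (ZMod n)ˣ} : x ∈ pmOne n ↔ x = 1 ∨ x = -1 := by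
  constructor
  · intro hx
    obtain ⟨k, hk⟩ := Subgroup.mem_closure_singleton.mp hx
    rcases Int.even_or_odd k with ⟨m, hm⟩ | ⟨m, hm⟩
    · left
      rw [← hk, hm]
      rw [show m + m = 2 * m by ring, _root_.zpow_mul]
      rw [zpow_two]; norm_num
    · right
      rw [← hk, hm, _root_.zpow_add, _root_.zpow_mul]
      rw [zpow_two]; norm_num
  · rintro (rfl | rfl)
    · exact one_mem _
    · exact Subgroup.subset_closure rfl

noncomputable def lam {n : ℕ} (A : Ghat n) : (ZMod n)ˣ :=
  (mem_Ghat.mp A.2).choose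

lemma s_lam {n : ℕ} (A : Ghat n) : s n (lam A) = redMap n (A : GL (Fin 2) ℤ) :=
  (mem_Ghat.mp A.2).choose_spec

noncomputable def lamHom (n : ℕ) : Ghat n →* (ZMod n)ˣ where
  toFun := lam
  map_one' := s_inj n (by rw [s_lam]; simp)
  map_mul' A B := s_inj n <| by
    show s n (lam (A * B)) = s n (lam A * lam B)
    rw [_root_.map_mul (s n), s_lam, s_lam, s_lam, Subgroup.coe_mul, _root_.map_mul]

end Stmt10Aux

namespace Stmt10Aux

lemma lam_sq {n : ℕ} (A : Ghat n) : (lam A) ^ 2 ∈ pmOne n := by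
  have hm : (Matrix.scalar (Fin 2) : ZMod n →+* Matrix (Fin 2) (Fin 2) (ZMod n)) ((lam A : (ZMod n)ˣ) : ZMod n)
      = (((A : GL (Fin 2) ℤ) : Matrix (Fin 2) (Fin 2) ℤ)).map (Int.cast : ℤ → ZMod n) := by
    have := congrArg (Units.val) (s_lam A)
    simpa [s, redMap, Units.coe_map, RingHom.mapMatrix_apply] using this
  have h : ((lam A : (ZMod n)ˣ) : ZMod n) ^ 2
      = Matrix.det ((((A : GL (Fin 2) ℤ) : Matrix (Fin 2) (Fin 2) ℤ)).map (Int.cast : ℤ → ZMod n)) := by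
    rw [← hm]; simp [Matrix.scalar_apply, Fin.prod_univ_two, sq]
  have hdet : Matrix.det ((A : GL (Fin 2) ℤ) : Matrix (Fin 2) (Fin 2) ℤ) = 1 ∨
      Matrix.det ((A : GL (Fin 2) ℤ) : Matrix (Fin 2) (Fin 2) ℤ) = -1 :=
    Int.isUnit_iff.mp ((Matrix.isUnit_iff_isUnit_det _).mp ((A : GL (Fin 2) ℤ)).isUnit)
  have h2 : ((lam A : ZMod n)) ^ 2 =
      ((Matrix.det ((A : GL (Fin 2) ℤ) : Matrix (Fin 2) (Fin 2) ℤ) : ℤ) : ZMod n) := by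
    rw [show (((((A : GL (Fin 2) ℤ) : Matrix (Fin 2) (Fin 2) ℤ)).det : ℤ) : ZMod n)
        = (Int.castRingHom (ZMod n)) (((A : GL (Fin 2) ℤ) : Matrix (Fin 2) (Fin 2) ℤ)).det from rfl,
      RingHom.map_det]
    simpa [RingHom.mapMatrix_apply] using h
  rw [mem_pmOne]
  rcases hdet with hd | hd <;> rw [hd] at h2
  · left; ext; push_cast; simpa using h2
  · right; ext; push_cast; simpa using h2

lemma mem_Gammahat_iff {n : ℕ} (A : Ghat n) :
    (A : GL (Fin 2) ℤ) ∈ Gammahat n ↔ lam A ∈ pmOne n := by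
  constructor
  · rintro ⟨x, hx, hsx⟩
    have : x = lam A := s_inj n (by rw [s_lam]; exact hsx)
    rwa [← this]
  · intro h
    exact ⟨lam A, h, s_lam A⟩

end Stmt10Aux

namespace Stmt10Aux

lemma exists_lift (n : ℕ) (hn : 2 ≤ n) (u : (ZMod n)ˣ) (hu : u ^ 2 ∈ pmOne n) :
    ∃ (U : GL (Fin 2) ℤ) (hU : U ∈ Ghat n), lam (⟨U, hU⟩ : Ghat n) = u := by
  haveI : NeZero n := ⟨by omega⟩
  haveI : NeZero (n ^ 2) := ⟨by positivity⟩
  -- the sign e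
  obtain ⟨e, he1, he2⟩ : ∃ e : ℤ, (e = 1 ∨ e = -1) ∧ ((e : ZMod n) = ((u : ZMod n)) ^ 2) := by
    rcases mem_pmOne.mp hu with h | h
    · exact ⟨1, Or.inl rfl, by rw [← Units.val_pow_eq_pow_val, h]; simp⟩
    · exact ⟨-1, Or.inr rfl, by rw [← Units.val_pow_eq_pow_val, h]; simp⟩
  -- an integer lift a of u
  set a : ℤ := (((u : ZMod n).val : ℕ) : ℤ) with ha_def
  have ha : ((a : ℤ) : ZMod n) = (u : ZMod n) := by
    simp [ha_def, ZMod.natCast_val, ZMod.cast_id]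
  -- a is invertible mod n^2
  have hcop : Nat.Coprime (u : ZMod n).val (n ^ 2) := (ZMod.val_coe_unit_coprime u).pow_right 2
  have hunit : IsUnit ((a : ℤ) : ZMod (n ^ 2)) := by
    rw [ha_def]
    push_cast
    exact (ZMod.isUnit_iff_coprime _ _).mpr hcop
  obtain ⟨c, hc⟩ := hunit.exists_right_inv
  -- integer lift b of u with a*b ≡ e mod n^2
  set b : ℤ := ((((c * (e : ZMod (n ^ 2))).val : ℕ)) : ℤ) with hb_def
  have hb2 : ((b : ℤ) : ZMod (n ^ 2)) = c * (e : ZMod (n ^ 2)) := by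
    simp [hb_def, ZMod.natCast_val, ZMod.cast_id]
  have hab2 : (((a * b : ℤ)) : ZMod (n ^ 2)) = ((e : ℤ) : ZMod (n ^ 2)) := by
    push_cast
    rw [hb2, ← mul_assoc, hc, one_mul]
  -- the divisibility
  obtain ⟨m, hm⟩ : ((n : ℤ) ^ 2) ∣ (a * b - e) := by
    have : ((a * b - e : ℤ) : ZMod (n ^ 2)) = 0 := by push_cast at hab2 ⊢; rw [hab2]; ring
    have := (ZMod.intCast_zmod_eq_zero_iff_dvd _ _).mp this
    push_cast at this
    exact this
  -- b reduces to u mod n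
  have hbn : ((b : ℤ) : ZMod n) = (u : ZMod n) := by
    have h1 : ((a : ZMod n)) * ((b : ZMod n)) = ((e : ℤ) : ZMod n) := by
      have h0 : (a * b : ℤ) = e + (n : ℤ) ^ 2 * m := by linarith
      rw [← Int.cast_mul, h0]
      push_cast
      simp
    rw [ha, he2] at h1
    exact (Units.isUnit u).mul_left_cancel (by rw [h1]; ring)
  -- the matrix
  set M : Matrix (Fin 2) (Fin 2) ℤ := !![a, m * n; (n : ℤ), b] with hM_def
  have hdet : M.det = e := by
    rw [hM_def, Matrix.det_fin_two_of]
    linear_combination hm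
  have hMunit : IsUnit M := (Matrix.isUnit_iff_isUnit_det M).mpr
    (by rw [hdet]; exact Int.isUnit_iff.mpr he1)
  refine ⟨hMunit.unit, ?_, ?_⟩
  · refine mem_Ghat.mpr ⟨u, ?_⟩
    apply Units.ext
    show (Matrix.scalar (Fin 2) : ZMod n →+* Matrix (Fin 2) (Fin 2) (ZMod n)) ((u : ZMod n))
      = ((Int.castRingHom (ZMod n)).mapMatrix) ((hMunit.unit : GL (Fin 2) ℤ) : Matrix (Fin 2) (Fin 2) ℤ)
    rw [IsUnit.unit_spec, hM_def]
    ext i j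
    fin_cases i <;> fin_cases j <;>
      simp [Matrix.scalar_apply, Matrix.diagonal, ha, hbn, ZMod.natCast_self]
  · apply s_inj n
    rw [s_lam]
    apply Units.ext
    show ((Int.castRingHom (ZMod n)).mapMatrix) ((hMunit.unit : GL (Fin 2) ℤ) : Matrix (Fin 2) (Fin 2) ℤ)
      = (Matrix.scalar (Fin 2) : ZMod n →+* Matrix (Fin 2) (Fin 2) (ZMod n)) ((u : ZMod n))
    rw [IsUnit.unit_spec, hM_def]
    ext i j
    fin_cases i <;> fin_cases j <;>
      simp [Matrix.scalar_apply, Matrix.diagonal, ha, hbn, ZMod.natCast_self]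

end Stmt10Aux



open Stmt10Aux

/-- For `n ≥ 2`, `Γ(n)` is a normal subgroup of `G_n` and
`G_n/Γ(n) ≅ { λ ∈ (ℤ/nℤ)^× | λ² ≡ ±1 mod n } / {±1 mod n}`: there is a surjective
homomorphism from `G_n` onto the latter quotient with kernel exactly `Γ(n)`.
(Working in `GL_2(ℤ)` rather than `PGL_2(ℤ)`: both quotients are unchanged since
`±I` lies in `Γ(n)`.) -/
theorem stmt_10 (n : ℕ) (hn : 2 ≤ n) :
    Gammahat n ≤ Ghat n ∧
    ∃ φ : Ghat n →* (Ktarget n ⧸ (pmOne n).subgroupOf (Ktarget n)),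
      Function.Surjective φ ∧ φ.ker = (Gammahat n).subgroupOf (Ghat n) := by
  constructor
  · intro A hA
    obtain ⟨x, _, hx⟩ := hA
    exact ⟨x, hx⟩
  · have hK : ∀ A : Ghat n, lamHom n A ∈ Ktarget n := fun A => by
      show powMonoidHom 2 (lamHom n A) ∈ pmOne n
      rw [powMonoidHom_apply]
      exact lam_sq A
    refine ⟨(QuotientGroup.mk' ((pmOne n).subgroupOf (Ktarget n))).comp
      ((lamHom n).codRestrict (Ktarget n) hK), ?_, ?_⟩
    · intro x
      obtain ⟨y, rfl⟩ := QuotientGroup.mk'_surjective ((pmOne n).subgroupOf (Ktarget n)) x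
      obtain ⟨u, hu⟩ := y
      have hu' : u ^ 2 ∈ pmOne n := by
        have := Subgroup.mem_comap.mp hu
        rwa [powMonoidHom_apply] at this
      obtain ⟨U, hU, hlam⟩ := exists_lift n hn u hu'
      refine ⟨⟨U, hU⟩, ?_⟩
      show QuotientGroup.mk' ((pmOne n).subgroupOf (Ktarget n))
          ((lamHom n).codRestrict (Ktarget n) hK ⟨U, hU⟩)
        = QuotientGroup.mk' ((pmOne n).subgroupOf (Ktarget n)) ⟨u, hu⟩
      congr 1
      exact Subtype.ext hlam
    · ext A
      rw [MonoidHom.mem_ker, MonoidHom.comp_apply, QuotientGroup.mk'_apply,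
        QuotientGroup.eq_one_iff, Subgroup.mem_subgroupOf, Subgroup.mem_subgroupOf]
      exact (mem_Gammahat_iff A).symm
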